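/- Let g = [[a,b],[c,d]] ∈ SL(2,ℝ) with a + d > 2 and c ≠ 0, and set λ± = ((a+d) ± √((a+d)² − 4))/2, w_a = (λ₊ − d)/c and w_r = (λ₋ − d)/c. Then for every point z of the upper half-plane ℍ = {z ∈ ℂ : Im z > 0}, the sequence gⁿ • z converges to w_a in ℂ and the sequence g⁻ⁿ • z converges to w_r in ℂ as n → ∞, where SL(2,ℝ) acts on ℍ by fractional linear transformations [[a,b],[c,d]] • z = (az+b)/(cz+d). -/

import Mathlib

noncomputable section

abbrev SL2 := Matrix.SpecialLinearGroup (Fin 2) ℝ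

/-- Trace of an element of `SL(2,ℝ)`. -/
def trc (g : SL2) : ℝ := g.1 0 0 + g.1 1 1

/-- `λ₊(g) = (tr g + √((tr g)² − 4))/2`. -/
def lamP (g : SL2) : ℝ := (trc g + Real.sqrt ((trc g) ^ 2 - 4)) / 2

/-- `λ₋(g) = (tr g − √((tr g)² − 4))/2`. -/
def lamM (g : SL2) : ℝ := (trc g - Real.sqrt ((trc g) ^ 2 - 4)) / 2

/-- Attracting fixed point `w_a(g) = (λ₊(g) − d)/c` of a hyperbolic `g` with `c ≠ 0`. -/
def wA (g : SL2) : ℝ := (lamP g - g.1 1 1) / g.1 1 0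

/-- Repelling fixed point `w_r(g) = (λ₋(g) − d)/c` of a hyperbolic `g` with `c ≠ 0`. -/
def wR (g : SL2) : ℝ := (lamM g - g.1 1 1) / g.1 1 0

lemma det_fact (g : SL2) : g.1 0 0 * g.1 1 1 - g.1 0 1 * g.1 1 0 = 1 := by
  have := g.2
  rwa [Matrix.det_fin_two] at this

lemma cayley (g : SL2) : g.1 * g.1 = (trc g) • g.1 - (1 : Matrix (Fin 2) (Fin 2) ℝ) := by
  have hd := det_fact g
  ext i j
  fin_cases i <;> fin_cases j <;>
    simp [Matrix.mul_apply, Fin.sum_univ_two, trc, Matrix.one_apply] <;> nlinarith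

lemma key (g : SL2) (htr : trc g > 2) (hc : g.1 1 0 ≠ 0) (z : UpperHalfPlane) :
    Filter.Tendsto (fun n : ℕ => ((g ^ n • z : UpperHalfPlane) : ℂ))
      Filter.atTop (nhds ((wA g : ℝ) : ℂ)) := by
  set t := trc g with ht
  set a := g.1 0 0 with ha
  set b := g.1 0 1 with hb
  set c := g.1 1 0 with hcdef
  set d := g.1 1 1 with hd
  have hdet : a * d - b * c = 1 := det_fact g
  set s := Real.sqrt (t ^ 2 - 4) with hs
  have hs2 : s ^ 2 = t ^ 2 - 4 := Real.sq_sqrt (by nlinarith)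
  have hspos : 0 < s := Real.sqrt_pos.mpr (by nlinarith)
  set P := lamP g with hP
  set M := lamM g with hM
  have hsum : P + M = t := by rw [hP, hM]; unfold lamP lamM; rw [← ht, ← hs]; ring
  have hdiff : P - M = s := by rw [hP, hM]; unfold lamP lamM; rw [← ht, ← hs]; ring
  have hprod : P * M = 1 := by
    have : P * M = (t ^ 2 - s ^ 2) / 4 := by rw [hP, hM]; unfold lamP lamM; rw [← ht, ← hs]; ring
    rw [this, hs2]; ring
  have hMpos : 0 < M := by nlinarith
  have hPM : M < P := by nlinarith
  have hPpos : 0 < P := lt_trans hMpos hPM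
  set μ := M / P with hμ
  have hμ0 : 0 ≤ μ := le_of_lt (div_pos hMpos hPpos)
  have hμ1 : μ < 1 := (div_lt_one hPpos).mpr hPM
  -- coefficients
  set α : ℕ → ℝ := fun n => (P ^ n - M ^ n) / s with hα
  set β : ℕ → ℝ := fun n => (M ^ n * P - P ^ n * M) / s with hβ
  have hmat : ∀ n : ℕ, (g ^ n).1 = α n • g.1 + β n • (1 : Matrix (Fin 2) (Fin 2) ℝ) := by
    intro n
    induction n with
    | zero =>
      have h0 : α 0 = 0 := by simp [hα]
      have h1 : β 0 = 1 := by
        simp only [hβ, pow_zero, one_mul, mul_one]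
        rw [hdiff, div_self hspos.ne']

      simp [h0, h1]
    | succ n ih =>
      have hstep : (g ^ (n + 1)).1 = (g ^ n).1 * g.1 := by rw [pow_succ]; simp
      rw [hstep, ih, add_mul, Matrix.smul_mul, Matrix.smul_mul, cayley g, one_mul, ← ht]
      have e1 : α (n + 1) = t * α n + β n := by
        simp only [hα, hβ, ← hsum]
        field_simp
        ring
      have e2 : β (n + 1) = -α n := by
        simp only [hα, hβ]
        linear_combination ((M ^ n - P ^ n) / s) * hprod
      rw [e1, e2]
      ext i j
      simp [Matrix.smul_apply, Matrix.sub_apply, Matrix.add_apply, Matrix.one_apply]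
      split_ifs <;> ring
  have hent : ∀ n : ℕ, (g ^ n).1 0 0 = α n * a + β n ∧ (g ^ n).1 0 1 = α n * b ∧
      (g ^ n).1 1 0 = α n * c ∧ (g ^ n).1 1 1 = α n * d + β n := by
    intro n
    rw [hmat n]
    simp [Matrix.add_apply, Matrix.smul_apply, Matrix.one_apply, ha, hb, hcdef, hd]
  -- the Möbius map as a function of the ratio r
  set F : ℝ → ℂ := fun r => (((a : ℂ) + r) * z + b) / ((c : ℂ) * z + (d + r)) with hF
  set r : ℕ → ℝ := fun n => β n / α n with hr
  have hαpos : ∀ n : ℕ, 1 ≤ n → 0 < α n := by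
    intro n hn
    apply div_pos _ hspos
    have : M ^ n < P ^ n := pow_lt_pow_left₀ hPM (le_of_lt hMpos) (by omega)
    linarith
  -- denominator nonvanishing for any real shift
  have hden : ∀ w : ℂ, w.im = 0 → (c : ℂ) * ↑z + w ≠ 0 := by
    intro w hw h
    have him : ((c : ℂ) * ↑z + w).im = c * z.im := by
      simp [Complex.add_im, Complex.mul_im, hw, UpperHalfPlane.coe_im]
    rw [h, Complex.zero_im] at him
    exact mul_ne_zero hc (ne_of_gt z.2) him.symm
  -- the sequence equals F ∘ r for n ≥ 1
  have hFr : ∀ n : ℕ, 1 ≤ n → ((g ^ n • z : UpperHalfPlane) : ℂ) = F (r n) := by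
    intro n hn
    obtain ⟨e00, e01, e10, e11⟩ := hent n
    have hαn := hαpos n hn
    have hαne : (α n : ℂ) ≠ 0 := by exact_mod_cast ne_of_gt hαn
    rw [UpperHalfPlane.specialLinearGroup_apply]
    have : ∀ x : ℝ, algebraMap ℝ ℝ x = x := fun x => rfl
    simp only [UpperHalfPlane.coe_mk, this, e00, e01, e10, e11]
    rw [hF]
    have hnum : ((α n * a + β n : ℝ) : ℂ) * z + ((α n * b : ℝ) : ℂ)
        = (α n : ℂ) * (((a : ℂ) + r n) * z + b) := by
      have : ((r n : ℝ) : ℂ) = (β n : ℂ) / (α n : ℂ) := by rw [hr]; push_cast; ring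
      push_cast
      rw [this]
      field_simp
    have hden2 : ((α n * c : ℝ) : ℂ) * z + ((α n * d + β n : ℝ) : ℂ)
        = (α n : ℂ) * ((c : ℂ) * z + ((d : ℂ) + r n)) := by
      have : ((r n : ℝ) : ℂ) = (β n : ℂ) / (α n : ℂ) := by rw [hr]; push_cast; ring
      push_cast
      rw [this]
      field_simp
    rw [hnum, hden2, mul_div_mul_left _ _ hαne]
  -- limit of r
  have hrlim : Filter.Tendsto r Filter.atTop (nhds (-M)) := by
    have hform : ∀ n : ℕ, 1 ≤ n → r n = (μ ^ n * P - M) / (1 - μ ^ n) := by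
      intro n hn
      have hPn : (0:ℝ) < P ^ n := pow_pos hPpos n
      have hMn : M ^ n < P ^ n := pow_lt_pow_left₀ hPM hMpos.le (by omega)
      have hne : P ^ n - M ^ n ≠ 0 := sub_ne_zero.mpr hMn.ne'
      have hμn : μ ^ n < 1 := by
        rw [hμ, div_pow, div_lt_one (pow_pos hPpos n)]
        exact hMn
      have h1 : (1:ℝ) - μ ^ n ≠ 0 := by linarith
      have hPn0 : P ^ n ≠ 0 := (pow_pos hPpos n).ne'
      simp only [hr, hβ, hα, hμ, div_pow]
      field_simp
    have hμlim : Filter.Tendsto (fun n : ℕ => μ ^ n) Filter.atTop (nhds 0) :=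
      tendsto_pow_atTop_nhds_zero_of_lt_one hμ0 hμ1
    have hmain : Filter.Tendsto (fun n : ℕ => (μ ^ n * P - M) / (1 - μ ^ n))
        Filter.atTop (nhds (-M)) := by
      have : -M = (0 * P - M) / (1 - 0) := by ring
      rw [this]
      exact ((hμlim.mul tendsto_const_nhds).sub tendsto_const_nhds).div
        (tendsto_const_nhds.sub hμlim) (by norm_num)
    apply hmain.congr'
    filter_upwards [Filter.eventually_ge_atTop 1] with n hn
    exact (hform n hn).symm
  -- F is continuous at -M
  have hFcont : ContinuousAt F (-M) := by
    apply ContinuousAt.div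
    · fun_prop
    · fun_prop
    · exact hden _ (by simp)
  -- F (-M) = wA g
  have hFval : F (-M) = ((wA g : ℝ) : ℂ) := by
    rw [hF]
    have hwa : wA g = (P - d) / c := rfl
    have htad : t = a + d := rfl
    have h1 : (a : ℝ) - M = wA g * c := by
      rw [hwa, div_mul_cancel₀ _ hc]; linarith
    have h2 : (b : ℝ) = wA g * (d - M) := by
      rw [hwa, div_mul_eq_mul_div, eq_div_iff hc]
      linear_combination (-d) * hsum + hprod - hdet + (-d) * htad
    rw [div_eq_iff (hden _ (by simp))]
    have h1c : (a : ℂ) - (M : ℂ) = ((wA g : ℝ) : ℂ) * c := by exact_mod_cast h1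
    have h2c : (b : ℂ) = ((wA g : ℝ) : ℂ) * ((d : ℂ) - M) := by exact_mod_cast h2
    push_cast
    linear_combination (z : ℂ) * h1c + h2c
  have := (hFcont.tendsto.comp hrlim)
  rw [hFval] at this
  apply this.congr'
  filter_upwards [Filter.eventually_ge_atTop 1] with n hn
  exact (hFr n hn).symm

/-- for hyperbolic `g ∈ SL(2,ℝ)` with `tr g > 2` and nonzero lower-left
entry, and any `z ∈ ℍ`, the sequence `gⁿ • z` converges to `w_a(g)` in `ℂ` and
`g⁻ⁿ • z` converges to `w_r(g)` in `ℂ` as `n → ∞`. -/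
theorem stmt_4 (g : SL2) (htr : trc g > 2) (hc : g.1 1 0 ≠ 0) (z : UpperHalfPlane) :
    Filter.Tendsto (fun n : ℕ => ((g ^ n • z : UpperHalfPlane) : ℂ))
      Filter.atTop (nhds ((wA g : ℝ) : ℂ)) ∧
    Filter.Tendsto (fun n : ℕ => ((g⁻¹ ^ n • z : UpperHalfPlane) : ℂ))
      Filter.atTop (nhds ((wR g : ℝ) : ℂ)) := by
  have hinv : (g⁻¹).1 = Matrix.adjugate g.1 := by
    simp [Matrix.SpecialLinearGroup.coe_inv]
  have e00 : (g⁻¹).1 0 0 = g.1 1 1 := by rw [hinv, Matrix.adjugate_fin_two]; simp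
  have e11 : (g⁻¹).1 1 1 = g.1 0 0 := by rw [hinv, Matrix.adjugate_fin_two]; simp
  have e10 : (g⁻¹).1 1 0 = -g.1 1 0 := by rw [hinv, Matrix.adjugate_fin_two]; simp
  have htrc : trc g⁻¹ = trc g := by unfold trc; rw [e00, e11]; ring
  constructor
  · exact key g htr hc z
  · have h2 := key g⁻¹ (by rwa [htrc]) (by rw [e10]; simpa using hc) z
    have : wA g⁻¹ = wR g := by
      have hlp : lamP g⁻¹ = lamP g := by unfold lamP; rw [htrc]
      have hnum : lamP g - g.1 0 0 = -(lamM g - g.1 1 1) := by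
        unfold lamP lamM trc; ring
      unfold wA wR
      rw [hlp, e11, e10, hnum, neg_div_neg_eq]
    rwa [this] at h2

end
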